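/- Let m ∈ ℝ, λ > 0, α > 0, β > 0. Then for every y ∈ ℝ, the Gamma mixture of Gaussian densities is a location-scale Student-t density: ∫₀^∞ N(y; m, (τλ)⁻¹) · G(τ; α, β) dτ = T(y; 2α, m, β/(αλ)). -/

import Mathlib

open Real MeasureTheory Matrix

/-- Univariate Gaussian density `N(y; m, v)` with mean `m`, variance `v`. -/
noncomputable def gauss1 (y m v : ℝ) : ℝ :=
  (2 * π * v) ^ (-(1 : ℝ) / 2) * Real.exp (-((y - m) ^ 2) / (2 * v))

/-- Multivariate Gaussian density in precision form: `N(θ; μ, P⁻¹)` with precision matrix `P`. -/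
noncomputable def gaussND {ι : Type*} [Fintype ι] [DecidableEq ι]
    (θ μ : ι → ℝ) (P : Matrix ι ι ℝ) : ℝ :=
  (2 * π) ^ (-(Fintype.card ι : ℝ) / 2) * P.det ^ ((1 : ℝ) / 2) *
    Real.exp (-(1 / 2) * ((θ - μ) ⬝ᵥ (P *ᵥ (θ - μ))))

/-- Gamma density `G(τ; α, β)` with shape `α` and rate `β`. -/
noncomputable def gammaPdf (τ α β : ℝ) : ℝ :=
  β ^ α / Real.Gamma α * τ ^ (α - 1) * Real.exp (-β * τ)

/-- Normal-Gamma density `NG(θ, τ; μ, Λ, α, β) = N(θ; μ, (τΛ)⁻¹) · G(τ; α, β)`. -/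
noncomputable def normalGamma {ι : Type*} [Fintype ι] [DecidableEq ι]
    (θ : ι → ℝ) (τ : ℝ) (μ : ι → ℝ) (Λ : Matrix ι ι ℝ) (α β : ℝ) : ℝ :=
  gaussND θ μ (τ • Λ) * gammaPdf τ α β

/-- Location-scale Student-t density `T(y; ν, m, s²)`. -/
noncomputable def studentT (y ν m s2 : ℝ) : ℝ :=
  Real.Gamma ((ν + 1) / 2) / (Real.sqrt (π * ν * s2) * Real.Gamma (ν / 2)) *
    (1 + (y - m) ^ 2 / (ν * s2)) ^ (-((ν + 1) / 2))

/-- Multivariate location-scale Student-t density `T_D(θ; ν, μ, Σ)`. -/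
noncomputable def multiStudentT {ι : Type*} [Fintype ι] [DecidableEq ι]
    (θ : ι → ℝ) (ν : ℝ) (μ : ι → ℝ) (S : Matrix ι ι ℝ) : ℝ :=
  Real.Gamma ((ν + Fintype.card ι) / 2) /
      (Real.Gamma (ν / 2) * (ν * π) ^ ((Fintype.card ι : ℝ) / 2) * S.det ^ ((1 : ℝ) / 2)) *
    (1 + (θ - μ) ⬝ᵥ (S⁻¹ *ᵥ (θ - μ)) / ν) ^ (-((ν + Fintype.card ι) / 2))

/-- The digamma function: the derivative of `ln ∘ Γ`. -/
noncomputable def digamma (x : ℝ) : ℝ := deriv (fun t => Real.log (Real.Gamma t)) x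

/-- The Beta function `B(a, b) = Γ(a)Γ(b)/Γ(a+b)`. -/
noncomputable def betaFn (a b : ℝ) : ℝ := Real.Gamma a * Real.Gamma b / Real.Gamma (a + b)

/-- a Gamma mixture of Gaussian densities is a location-scale Student-t density. -/
theorem gamma_mixture_of_gaussians (m lam α β : ℝ) (hlam : 0 < lam)
    (hα : 0 < α) (hβ : 0 < β) (y : ℝ) :
    ∫ τ in Set.Ioi (0 : ℝ), gauss1 y m (τ * lam)⁻¹ * gammaPdf τ α β =
      studentT y (2 * α) m (β / (α * lam)) := by
  have hπ := pi_pos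
  set d := (y - m) ^ 2 with hd
  have hd0 : 0 ≤ d := sq_nonneg _
  set c : ℝ := β + lam * d / 2 with hc
  have hc0 : 0 < c := by positivity
  have key : ∫ τ in Set.Ioi (0 : ℝ), gauss1 y m (τ * lam)⁻¹ * gammaPdf τ α β
      = ((2 * π) ^ (-(1:ℝ)/2) * lam ^ ((1:ℝ)/2) * (β ^ α / Real.Gamma α)) *
        ∫ t in Set.Ioi (0:ℝ), t ^ (α + 1/2 - 1) * Real.exp (-(c * t)) := by
    rw [← integral_const_mul]
    apply setIntegral_congr_fun measurableSet_Ioi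
    intro t ht
    simp only [gauss1, gammaPdf]
    have ht0 : 0 < t := ht
    have h1 : (2 * π * (t * lam)⁻¹) ^ (-(1:ℝ)/2)
        = (2 * π) ^ (-(1:ℝ)/2) * lam ^ ((1:ℝ)/2) * t ^ ((1:ℝ)/2) := by
      rw [Real.mul_rpow (by positivity) (by positivity),
        Real.inv_rpow (by positivity), show (-(1:ℝ)/2) = -((1:ℝ)/2) by norm_num,
        ← Real.rpow_neg (by positivity), neg_neg, Real.mul_rpow ht0.le hlam.le]
      ring
    have h2 : -d / (2 * (t * lam)⁻¹) = -(lam * d / 2 * t) := by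
      field_simp
    rw [h1, h2]
    have h3 : t ^ ((1:ℝ)/2) * t ^ (α - 1) = t ^ (α + 1/2 - 1) := by
      rw [← Real.rpow_add ht0]; ring_nf
    have h4 : Real.exp (-(lam * d / 2 * t)) * Real.exp (-β * t) = Real.exp (-(c * t)) := by
      rw [← Real.exp_add]; congr 1; rw [hc]; ring
    calc (2 * π) ^ (-(1:ℝ)/2) * lam ^ ((1:ℝ)/2) * t ^ ((1:ℝ)/2) * Real.exp (-(lam * d / 2 * t)) *
          (β ^ α / Real.Gamma α * t ^ (α - 1) * Real.exp (-β * t))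
        = (2 * π) ^ (-(1:ℝ)/2) * lam ^ ((1:ℝ)/2) * (β ^ α / Real.Gamma α) *
          ((t ^ ((1:ℝ)/2) * t ^ (α - 1)) * (Real.exp (-(lam * d / 2 * t)) * Real.exp (-β * t))) := by
          ring
      _ = _ := by rw [h3, h4]
  rw [key, integral_rpow_mul_exp_neg_mul_Ioi (by positivity) hc0]
  -- now pure algebra
  simp only [studentT]
  have hν1 : (2 * α + 1) / 2 = α + 1/2 := by ring
  have hν2 : 2 * α / 2 = α := by ring
  rw [hν1, hν2]
  have hs : π * (2 * α) * (β / (α * lam)) = 2 * π * β / lam := by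
    field_simp
  have hu : 1 + d / (2 * α * (β / (α * lam))) = 1 + lam * d / (2 * β) := by
    field_simp
  rw [hs, hu]
  have hcu : c = β * (1 + lam * d / (2 * β)) := by
    rw [hc]; field_simp
  have hu0 : 0 < 1 + lam * d / (2 * β) := by positivity
  rw [Real.sqrt_eq_rpow]
  have h5 : (1 / c) ^ (α + 1/2) = β ^ (-(α + 1/2)) * (1 + lam * d / (2 * β)) ^ (-(α + 1/2)) := by
    rw [one_div, Real.inv_rpow hc0.le, ← Real.rpow_neg hc0.le, hcu,
      Real.mul_rpow hβ.le hu0.le]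
  rw [h5]
  have main : (2 * π) ^ (-(1:ℝ)/2) * lam ^ ((1:ℝ)/2) * (β ^ α / Real.Gamma α) * β ^ (-(α + 1/2))
      = 1 / ((2 * π * β / lam) ^ ((1:ℝ)/2) * Real.Gamma α) := by
    rw [Real.div_rpow (by positivity) hlam.le, Real.mul_rpow (by positivity) hβ.le]
    have e0 : (2 * π) ^ (-(1:ℝ)/2) = ((2 * π) ^ ((1:ℝ)/2))⁻¹ := by
      rw [show (-(1:ℝ)/2) = -((1:ℝ)/2) by norm_num, Real.rpow_neg (by positivity)]
    have e4 : β ^ α * β ^ (-(α + 1/2)) * β ^ ((1:ℝ)/2) = 1 := by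
      rw [← Real.rpow_add hβ, ← Real.rpow_add hβ, ← Real.rpow_zero β]
      congr 1; ring
    have hg : Real.Gamma α ≠ 0 := (Real.Gamma_pos_of_pos hα).ne'
    have hl : lam ^ ((1:ℝ)/2) ≠ 0 := by positivity
    have hb : β ^ ((1:ℝ)/2) ≠ 0 := by positivity
    have hp : (2 * π) ^ ((1:ℝ)/2) ≠ 0 := by positivity
    rw [e0]
    set A := β ^ α
    set X := β ^ (-(α + 1/2))
    set B := β ^ ((1:ℝ)/2)
    set P := (2 * π) ^ ((1:ℝ)/2)
    set L := lam ^ ((1:ℝ)/2)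
    set G := Real.Gamma α
    field_simp
    linear_combination e4
  linear_combination (Real.Gamma (α + 1/2) * (1 + lam * d / (2 * β)) ^ (-(α + 1/2))) * main
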